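/- Let ρ ∈ (0,1), C, Ĉ > 0 and α, β, α̂, β̂ ∈ ℝ. Let U, Û be locally finite Borel measures on [0,∞) and L, L̂ be slowly varying at 0⁺ with U([0,x])/(x^ρ L(x)) → 1 and Û([0,x])/(x^{ρ} L̂(x)) → 1 as x → 0⁺. Define Ψ(x) := C ∫_{[0,x]} e^{(α−β)y} U(dy) and Ψ̂(x) := Ĉ ∫_{[0,x]} e^{(α̂−β̂)y} Û(dy). Assume the limit Q := lim_{x→0⁺} L(x)/L̂(x) exists in [0,∞]. Then (Ψ(x) − Ψ̂(x))/(x^{ρ} L̂(x)) → C·Q − Ĉ as x → 0⁺ (with the convention C·∞ − Ĉ = +∞). -/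

import Mathlib

open Filter Topology MeasureTheory Set

/-- A function `L : (0,∞) → (0,∞)` is slowly varying at `0⁺` if for every `l > 0`,
`L(l·x)/L(x) → 1` as `x → 0⁺`. -/
def SlowlyVaryingAtZero (L : ℝ → ℝ) : Prop :=
  ∀ l : ℝ, 0 < l → Tendsto (fun x : ℝ => L (l * x) / L x) (𝓝[>] 0) (𝓝 1)

private lemma aux_exp_integral_tendsto (rho : ℝ) (hrho : 0 < rho) (c : ℝ)
    (U : Measure ℝ) [IsLocallyFiniteMeasure U]
    (L : ℝ → ℝ) (hLpos : ∀ x : ℝ, 0 < x → 0 < L x)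
    (hU : Tendsto (fun x : ℝ => (U (Set.Icc 0 x)).toReal / (x ^ rho * L x))
      (𝓝[>] 0) (𝓝 1)) :
    Tendsto (fun x : ℝ => (∫ y in Set.Icc 0 x, Real.exp (c * y) ∂U) / (x ^ rho * L x))
      (𝓝[>] 0) (𝓝 1) := by
  have hexp : ∀ s : ℝ, Tendsto (fun x : ℝ => Real.exp (s * x)) (𝓝[>] 0) (𝓝 1) := by
    intro s
    have : Tendsto (fun x : ℝ => Real.exp (s * x)) (𝓝 0) (𝓝 (Real.exp (s * 0))) :=
      (Real.continuous_exp.comp (continuous_const.mul continuous_id)).tendsto 0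
    simpa using this.mono_left nhdsWithin_le_nhds
  have hg₁ : Tendsto (fun x : ℝ => Real.exp (-|c| * x) * ((U (Set.Icc 0 x)).toReal / (x ^ rho * L x)))
      (𝓝[>] 0) (𝓝 1) := by
    simpa using (hexp (-|c|)).mul hU
  have hg₂ : Tendsto (fun x : ℝ => Real.exp (|c| * x) * ((U (Set.Icc 0 x)).toReal / (x ^ rho * L x)))
      (𝓝[>] 0) (𝓝 1) := by
    simpa using (hexp |c|).mul hU
  refine tendsto_of_tendsto_of_tendsto_of_le_of_le' hg₁ hg₂ ?_ ?_
  · filter_upwards [self_mem_nhdsWithin] with x hx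
    have hx0 : (0:ℝ) < x := hx
    have hd : 0 < x ^ rho * L x :=
      mul_pos (Real.rpow_pos_of_pos hx0 rho) (hLpos x hx0)
    have hfin : U (Set.Icc 0 x) < ⊤ := IsCompact.measure_lt_top isCompact_Icc
    have hint : IntegrableOn (fun y => Real.exp (c * y)) (Set.Icc 0 x) U :=
      (Real.continuous_exp.comp (continuous_const.mul continuous_id)).integrableOn_Icc
    have hle : Real.exp (-|c| * x) * (U (Set.Icc 0 x)).toReal
        ≤ ∫ y in Set.Icc 0 x, Real.exp (c * y) ∂U := by
      have := setIntegral_mono_on (f := fun _ : ℝ => Real.exp (-|c| * x))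
        (g := fun y => Real.exp (c * y)) (s := Set.Icc 0 x)
        (integrableOn_const hfin.ne) hint measurableSet_Icc ?_
      · simpa [integral_const, smul_eq_mul, mul_comm, measureReal_def] using this
      · intro y hy
        apply Real.exp_le_exp.2
        have h1 : |c| * y ≤ |c| * x := by
          apply mul_le_mul_of_nonneg_left hy.2 (abs_nonneg c)
        have h2 : -(|c| * x) ≤ c * y := by
          have : |c * y| ≤ |c| * x := by
            rw [abs_mul, abs_of_nonneg hy.1]
            exact h1
          linarith [neg_abs_le (c * y)]
        linarith
    rw [← mul_div_assoc]
    exact div_le_div_of_nonneg_right hle hd.le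
  · filter_upwards [self_mem_nhdsWithin] with x hx
    have hx0 : (0:ℝ) < x := hx
    have hd : 0 < x ^ rho * L x :=
      mul_pos (Real.rpow_pos_of_pos hx0 rho) (hLpos x hx0)
    have hfin : U (Set.Icc 0 x) < ⊤ := IsCompact.measure_lt_top isCompact_Icc
    have hint : IntegrableOn (fun y => Real.exp (c * y)) (Set.Icc 0 x) U :=
      (Real.continuous_exp.comp (continuous_const.mul continuous_id)).integrableOn_Icc
    have hle : (∫ y in Set.Icc 0 x, Real.exp (c * y) ∂U)
        ≤ Real.exp (|c| * x) * (U (Set.Icc 0 x)).toReal := by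
      have := setIntegral_mono_on (f := fun y => Real.exp (c * y))
        (g := fun _ : ℝ => Real.exp (|c| * x)) (s := Set.Icc 0 x)
        hint (integrableOn_const hfin.ne) measurableSet_Icc ?_
      · simpa [integral_const, smul_eq_mul, mul_comm, measureReal_def] using this
      · intro y hy
        apply Real.exp_le_exp.2
        calc c * y ≤ |c * y| := le_abs_self _
          _ = |c| * y := by rw [abs_mul, abs_of_nonneg hy.1]
          _ ≤ |c| * x := mul_le_mul_of_nonneg_left hy.2 (abs_nonneg c)
    rw [← mul_div_assoc]
    exact div_le_div_of_nonneg_right hle hd.le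

/-- third limit case, `ρ = ρ̂`, of Lemma 4.1 of the paper. If the limit
`Q = lim_{x→0⁺} L(x)/L̂(x)` exists in `[0,∞]`, then
`(Ψ(x) − Ψ̂(x))/(x^ρ L̂(x)) → C·Q − Ĉ` as `x → 0⁺` (in the extended reals, with the
convention `C·∞ − Ĉ = +∞`). -/
theorem Psi_diff_tendsto_of_ratio_limit
    (rho : ℝ) (hrho : rho ∈ Set.Ioo (0:ℝ) 1)
    (C Ch : ℝ) (hC : 0 < C) (hCh : 0 < Ch)
    (alpha beta alphah betah : ℝ)
    (U Uh : Measure ℝ) [IsLocallyFiniteMeasure U] [IsLocallyFiniteMeasure Uh]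
    (hU0 : U (Set.Iio 0) = 0) (hUh0 : Uh (Set.Iio 0) = 0)
    (L Lh : ℝ → ℝ)
    (hLpos : ∀ x : ℝ, 0 < x → 0 < L x) (hLhpos : ∀ x : ℝ, 0 < x → 0 < Lh x)
    (hLsv : SlowlyVaryingAtZero L) (hLhsv : SlowlyVaryingAtZero Lh)
    (hU : Tendsto (fun x : ℝ => (U (Set.Icc 0 x)).toReal / (x ^ rho * L x))
      (𝓝[>] 0) (𝓝 1))
    (hUh : Tendsto (fun x : ℝ => (Uh (Set.Icc 0 x)).toReal / (x ^ rho * Lh x))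
      (𝓝[>] 0) (𝓝 1))
    (Psi Psih : ℝ → ℝ)
    (hPsi : ∀ x : ℝ, Psi x = C * ∫ y in Set.Icc 0 x, Real.exp ((alpha - beta) * y) ∂U)
    (hPsih : ∀ x : ℝ,
      Psih x = Ch * ∫ y in Set.Icc 0 x, Real.exp ((alphah - betah) * y) ∂Uh)
    (Q : EReal) (hQ0 : 0 ≤ Q)
    (hQ : Tendsto (fun x : ℝ => ((L x / Lh x : ℝ) : EReal)) (𝓝[>] 0) (𝓝 Q)) :
    Tendsto (fun x : ℝ => (((Psi x - Psih x) / (x ^ rho * Lh x) : ℝ) : EReal))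
      (𝓝[>] 0) (𝓝 ((C : EReal) * Q - (Ch : EReal))) := by
  set A : ℝ → ℝ := fun x => (∫ y in Set.Icc 0 x, Real.exp ((alpha - beta) * y) ∂U) / (x ^ rho * L x)
  set B : ℝ → ℝ := fun x => (∫ y in Set.Icc 0 x, Real.exp ((alphah - betah) * y) ∂Uh) / (x ^ rho * Lh x)
  have hA : Tendsto A (𝓝[>] 0) (𝓝 1) :=
    aux_exp_integral_tendsto rho hrho.1 (alpha - beta) U L hLpos hU
  have hB : Tendsto B (𝓝[>] 0) (𝓝 1) :=
    aux_exp_integral_tendsto rho hrho.1 (alphah - betah) Uh Lh hLhpos hUh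
  -- first factor: C * A x → C in EReal
  have hCA : Tendsto (fun x : ℝ => ((C * A x : ℝ) : EReal)) (𝓝[>] 0) (𝓝 (C : EReal)) := by
    apply EReal.tendsto_coe.2
    simpa using (tendsto_const_nhds.mul hA : Tendsto (fun x => C * A x) (𝓝[>] 0) (𝓝 (C * 1)))
  -- product: → C * Q
  have hmul : Tendsto (fun x : ℝ => ((C * A x : ℝ) : EReal) * ((L x / Lh x : ℝ) : EReal))
      (𝓝[>] 0) (𝓝 ((C : EReal) * Q)) := by
    have hcont : ContinuousAt (fun p : EReal × EReal => p.1 * p.2) ((C : EReal), Q) := by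
      apply EReal.continuousAt_mul
      · left; show (C : EReal) ≠ 0; exact_mod_cast hC.ne'
      · left; show (C : EReal) ≠ 0; exact_mod_cast hC.ne'
      · left; exact (EReal.coe_ne_bot C)
      · left; exact (EReal.coe_ne_top C)
    exact (hcont.tendsto).comp (hCA.prodMk_nhds hQ)
  -- second term: Ch * B x → Ch in EReal
  have hChB : Tendsto (fun x : ℝ => ((Ch * B x : ℝ) : EReal)) (𝓝[>] 0) (𝓝 (Ch : EReal)) := by
    apply EReal.tendsto_coe.2
    simpa using (tendsto_const_nhds.mul hB : Tendsto (fun x => Ch * B x) (𝓝[>] 0) (𝓝 (Ch * 1)))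
  -- subtraction
  have hsub : Tendsto (fun x : ℝ =>
      ((C * A x : ℝ) : EReal) * ((L x / Lh x : ℝ) : EReal) - ((Ch * B x : ℝ) : EReal))
      (𝓝[>] 0) (𝓝 ((C : EReal) * Q - (Ch : EReal))) := by
    have hcont : ContinuousAt (fun p : EReal × EReal => p.1 + p.2) ((C : EReal) * Q, (-Ch : ℝ)) := by
      apply EReal.continuousAt_add
      · right; exact EReal.coe_ne_bot _
      · right; exact EReal.coe_ne_top _
    have hneg : Tendsto (fun x : ℝ => ((-(Ch * B x) : ℝ) : EReal)) (𝓝[>] 0) (𝓝 ((-Ch : ℝ) : EReal)) := by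
      apply EReal.tendsto_coe.2
      simpa using ((tendsto_const_nhds.mul hB : Tendsto (fun x => Ch * B x) (𝓝[>] 0) (𝓝 (Ch * 1))).neg)
    have h1 := (hcont.tendsto).comp (hmul.prodMk_nhds hneg)
    simp only [Function.comp] at h1
    have heq : ∀ x : ℝ, ((C * A x : ℝ) : EReal) * ((L x / Lh x : ℝ) : EReal)
        + ((-(Ch * B x) : ℝ) : EReal)
        = ((C * A x : ℝ) : EReal) * ((L x / Lh x : ℝ) : EReal) - ((Ch * B x : ℝ) : EReal) := by
      intro x
      rw [EReal.coe_neg, sub_eq_add_neg]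
    have h2 := h1.congr heq
    have h3 : (C : EReal) * Q + ((-Ch : ℝ) : EReal) = (C : EReal) * Q - (Ch : EReal) := by
      rw [EReal.coe_neg, sub_eq_add_neg]
    rwa [h3] at h2
  -- eventual equality
  apply hsub.congr'
  filter_upwards [self_mem_nhdsWithin] with x hx
  have hx0 : (0:ℝ) < x := hx
  have hxr : x ^ rho ≠ 0 := (Real.rpow_pos_of_pos hx0 rho).ne'
  have hL : L x ≠ 0 := (hLpos x hx0).ne'
  have hLh : Lh x ≠ 0 := (hLhpos x hx0).ne'
  rw [← EReal.coe_mul, ← EReal.coe_sub]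
  congr 1
  rw [hPsi, hPsih]
  simp only [A, B]
  field_simp
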